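/- Let k be a field and n ≥ 1. The Kronecker representation k^{(C_n)} given by the pair of linear maps k^n → k^n consisting of the identity and the cyclic shift σ (σ(e_i) = e_{i+1} for 1 ≤ i ≤ n−1 and σ(e_n) = e_1) is isomorphic as a Kronecker representation to the regular representation R(y^n − x^n) = (V_{n−1} ⇉ V_n/⟨y^n − x^n⟩; g ↦ x·g + ⟨y^n − x^n⟩, g ↦ y·g + ⟨y^n − x^n⟩). -/

import Mathlib

/-- A quiver: vertex set `V`, arrow set `A`, start map `s`, terminus map `t`. -/
structure Quiv : Type 1 where
  V : Type
  A : Type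
  s : A → V
  t : A → V

/-- Two quivers are isomorphic if there is a pair of bijections commuting with
start and terminus maps. -/
def Quiv.Iso (Γ Δ : Quiv) : Prop :=
  ∃ (φ₀ : Γ.V → Δ.V) (φ₁ : Γ.A → Δ.A),
    (∀ a, Δ.s (φ₁ a) = φ₀ (Γ.s a)) ∧ (∀ a, Δ.t (φ₁ a) = φ₀ (Γ.t a)) ∧
    Function.Bijective φ₀ ∧ Function.Bijective φ₁

/-- The equivalence relation generated by `s a ~ t a`. -/
def Quiv.connRel (Γ : Quiv) : Γ.V → Γ.V → Prop :=
  Relation.EqvGen (fun u w => ∃ a, Γ.s a = u ∧ Γ.t a = w)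

/-- The connected component of a vertex `v`: the full subquiver on all vertices
related to `v`, with all arrows whose start lies in it. -/
def Quiv.component (Γ : Quiv) (v : Γ.V) : Quiv where
  V := {u : Γ.V // Γ.connRel u v}
  A := {a : Γ.A // Γ.connRel (Γ.s a) v}
  s a := ⟨Γ.s a.1, a.2⟩
  t a := ⟨Γ.t a.1, Relation.EqvGen.trans _ _ _
    (Relation.EqvGen.symm _ _ (Relation.EqvGen.rel _ _ ⟨a.1, rfl, rfl⟩)) a.2⟩

/-- `cyclicQuiv r` is the cyclic quiver `C_{r+1}`: vertices `0,…,r` and an arrow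
`i → i+1 (mod r+1)` for each vertex `i`. -/
def cyclicQuiv (r : ℕ) : Quiv where
  V := Fin (r+1)
  A := Fin (r+1)
  s := id
  t := fun i => i + 1

/-- `linearQuiv r` is the linear quiver `A_{r+1}`: vertices `0,…,r` and arrows
`i → i+1` for `0 ≤ i < r`. -/
def linearQuiv (r : ℕ) : Quiv where
  V := Fin (r+1)
  A := Fin r
  s := Fin.castSucc
  t := Fin.succ

open MvPolynomial

noncomputable section

/-- Polynomials in two variables `x = X 0`, `y = X 1`. -/
abbrev Poly2 (k : Type) [Field k] := MvPolynomial (Fin 2) k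

/-- `Vd k n` is the space `V_n` of homogeneous polynomials of degree `n`. -/
abbrev Vd (k : Type) [Field k] (n : ℕ) : Submodule k (Poly2 k) :=
  homogeneousSubmodule (Fin 2) k n

/-- `Vm k n` is the space `V_{n-1}`, with `V_{-1} = 0`. -/
abbrev Vm (k : Type) [Field k] : ℕ → Submodule k (Poly2 k)
  | 0 => ⊥
  | n+1 => Vd k n

theorem Vm_mul_mem (k : Type) [Field k] (n : ℕ) {c : Poly2 k} (hc : c.IsHomogeneous 1)
    {g : Poly2 k} (hg : g ∈ Vm k n) : c * g ∈ Vd k n := by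
  cases n with
  | zero =>
      rw [Submodule.mem_bot] at hg
      subst hg
      rw [mul_zero]
      exact Submodule.zero_mem (Vd k 0)
  | succ m =>
      rw [mem_homogeneousSubmodule] at hg ⊢
      simpa [Nat.add_comm] using hc.mul hg

/-- Multiplication by the variable `X j`, as a linear map `V_{n-1} → V_n`. -/
def mulVar (k : Type) [Field k] (n : ℕ) (j : Fin 2) : Vm k n →ₗ[k] Vd k n where
  toFun g := ⟨X j * g.1, Vm_mul_mem k n (isHomogeneous_X k j) g.2⟩
  map_add' a b := by ext; simp [mul_add]
  map_smul' c a := by ext; simp [mul_smul_comm]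

/-- Multiplication by `x`. -/
def mulX (k : Type) [Field k] (n : ℕ) : Vm k n →ₗ[k] Vd k n := mulVar k n 0
/-- Multiplication by `y`. -/
def mulY (k : Type) [Field k] (n : ℕ) : Vm k n →ₗ[k] Vd k n := mulVar k n 1

end

noncomputable section
open MvPolynomial

/-- The vertex space of `|R(f)|`: the quotient `V_n/⟨f⟩` by the line spanned
by `f`. -/
abbrev RV (k : Type) [Field k] (n : ℕ) (f : Vd k n) : Type :=
  (Vd k n) ⧸ (k ∙ f)

/-- The map `V_{n-1} → V_n/⟨f⟩`, `g ↦ x·g + ⟨f⟩`. -/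
def Ru (k : Type) [Field k] (n : ℕ) (f : Vd k n) : Vm k n →ₗ[k] RV k n f :=
  (Submodule.mkQ (k ∙ f)) ∘ₗ mulX k n

/-- The map `V_{n-1} → V_n/⟨f⟩`, `g ↦ y·g + ⟨f⟩`. -/
def Rv (k : Type) [Field k] (n : ℕ) (f : Vd k n) : Vm k n →ₗ[k] RV k n f :=
  (Submodule.mkQ (k ∙ f)) ∘ₗ mulY k n

/-- The quiver `|R(f)|`: vertices `V_n/⟨f⟩`, arrows `V_{n-1}`, start
`g ↦ x·g + ⟨f⟩`, terminus `g ↦ y·g + ⟨f⟩`. -/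
abbrev RQuiv (k : Type) [Field k] (n : ℕ) (f : Vd k n) : Quiv where
  V := RV k n f
  A := Vm k n
  s := Ru k n f
  t := Rv k n f

end

noncomputable section
open MvPolynomial

/-- The polynomial `y^n - x^n` as an element of `V_n`. -/
def fCyc (k : Type) [Field k] (n : ℕ) : Vd k n :=
  ⟨(X 1 : Poly2 k) ^ n - (X 0 : Poly2 k) ^ n, by
    refine Submodule.sub_mem _ ?_ ?_ <;>
      · rw [mem_homogeneousSubmodule]
        simpa using (isHomogeneous_X k _).pow n⟩

/-- The cyclic shift `σ : k^n → k^n`, `σ(e_i) = e_{i+1 (mod n)}`; as a map on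
functions it is precomposition with `j ↦ j - 1 (mod n)`. -/
def cycShift (k : Type) [Field k] (n : ℕ) (hn : 0 < n) : (Fin n → k) →ₗ[k] (Fin n → k) :=
  LinearMap.funLeft k k (fun j : Fin n => ⟨(j.1 + (n - 1)) % n, Nat.mod_lt _ hn⟩)


variable (k : Type) [Field k]

/-- exponent vector (a, b) -/
def dd (a b : ℕ) : Fin 2 →₀ ℕ := Finsupp.single 0 a + Finsupp.single 1 b

@[simp] lemma dd_apply0 (a b : ℕ) : dd a b 0 = a := by
  simp [dd, Finsupp.single_apply]

@[simp] lemma dd_apply1 (a b : ℕ) : dd a b 1 = b := by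
  simp [dd, Finsupp.single_apply]

lemma eq_dd (e : Fin 2 →₀ ℕ) : e = dd (e 0) (e 1) := by
  ext j; fin_cases j <;> simp [dd, Finsupp.single_apply]

@[simp] lemma dd_degree (a b : ℕ) : (dd a b).degree = a + b := by
  have : (dd a b).degree = ∑ i : Fin 2, dd a b i := by
    rw [Finsupp.degree]
    exact Finset.sum_subset (Finset.subset_univ _)
      (fun i _ hi => by simpa using (Finsupp.notMem_support_iff.mp hi))
  rw [this, Fin.sum_univ_two, dd_apply0, dd_apply1]

lemma degree_two (e : Fin 2 →₀ ℕ) : e.degree = e 0 + e 1 := by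
  conv_lhs => rw [eq_dd e]
  simp

lemma dd_add0 (a b : ℕ) : Finsupp.single 0 1 + dd a b = dd (a+1) b := by
  ext j; fin_cases j <;> simp [dd, Finsupp.single_apply, Nat.add_comm]

lemma dd_add1 (a b : ℕ) : Finsupp.single 1 1 + dd a b = dd a (b+1) := by
  ext j; fin_cases j <;> simp [dd, Finsupp.single_apply, Nat.add_comm]



/-- Main structural lemma -/
lemma homog_sum {n : ℕ} {g : MvPolynomial (Fin 2) k} (hg : g.IsHomogeneous n) :
    ∑ i ∈ Finset.range (n+1), monomial (dd (n-i) i) (coeff (dd (n-i) i) g) = g := by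
  apply MvPolynomial.ext
  intro e
  rw [coeff_sum]
  simp only [coeff_monomial]
  by_cases h : coeff e g = 0
  · rw [h]
    apply Finset.sum_eq_zero
    intro i _
    split_ifs with h'
    · rw [h']; exact h
    · rfl
  · have hdeg : e.degree = n := by
      have := hg h; rw [Finsupp.degree_eq_weight_one]; exact this
    have he1 : e 1 ≤ n := by
      have := degree_two e; omega
    have hee : e = dd (n - e 1) (e 1) := by
      have h0 : e 0 = n - e 1 := by have := degree_two e; omega
      conv_lhs => rw [eq_dd e]
      rw [h0]
    have : ∀ i ∈ Finset.range (n+1),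
        (if dd (n-i) i = e then coeff (dd (n-i) i) g else 0)
        = if i = e 1 then coeff e g else 0 := by
      intro i _
      by_cases hi : i = e 1
      · subst hi
        rw [if_pos rfl, if_pos hee.symm, ← hee]
      · rw [if_neg hi, if_neg]
        intro hc
        apply hi
        have := congrArg (fun f => f 1) hc
        simpa using this
    rw [Finset.sum_congr rfl this, Finset.sum_ite_eq' (Finset.range (n+1)) (e 1)]
    rw [if_pos (Finset.mem_range.mpr (by omega))]

lemma dd_eq_iff {a b c d : ℕ} : dd a b = dd c d ↔ a = c ∧ b = d := by
  constructor
  · intro h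
    constructor
    · have := congrArg (fun f => f 0) h; simpa using this
    · have := congrArg (fun f => f 1) h; simpa using this
  · rintro ⟨rfl, rfl⟩; rfl

lemma dd_zero_right (a : ℕ) : dd a 0 = Finsupp.single 0 a := by simp [dd]
lemma dd_zero_left (b : ℕ) : dd 0 b = Finsupp.single 1 b := by simp [dd]

lemma coeff_dd_sum {N : ℕ} (c : Fin N → k) (a : Fin N → ℕ) (j : Fin N) :
    MvPolynomial.coeff (dd (a j) j.1)
      (∑ i : Fin N, c i • monomial (dd (a i) i.1) (1:k)) = c j := by
  rw [MvPolynomial.coeff_sum]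
  simp only [coeff_smul, coeff_monomial, smul_eq_mul]
  rw [Finset.sum_eq_single j]
  · simp
  · intro i _ hij
    rw [if_neg, mul_zero]
    intro hc
    exact hij (Fin.ext ((dd_eq_iff.mp hc).2))
  · intro h; exact absurd (Finset.mem_univ j) h

lemma coeff_dd_sum_ne {N : ℕ} (c : Fin N → k) (a : Fin N → ℕ) (b1 b2 : ℕ)
    (h : ∀ i : Fin N, i.1 ≠ b2) :
    MvPolynomial.coeff (dd b1 b2)
      (∑ i : Fin N, c i • monomial (dd (a i) i.1) (1:k)) = 0 := by
  rw [MvPolynomial.coeff_sum]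
  apply Finset.sum_eq_zero
  intro i _
  simp only [coeff_smul, coeff_monomial, smul_eq_mul]
  rw [if_neg, mul_zero]
  intro hc
  exact h i (dd_eq_iff.mp hc).2

def sumMap (m N : ℕ) (a : Fin N → ℕ) (h : ∀ i : Fin N, a i + i.1 = m) :
    (Fin N → k) →ₗ[k] Vd k m where
  toFun c := ⟨∑ i : Fin N, c i • monomial (dd (a i) i.1) (1:k), by
    apply Submodule.sum_mem
    intro i _
    apply Submodule.smul_mem
    rw [mem_homogeneousSubmodule]
    exact isHomogeneous_monomial _ (by rw [dd_degree]; exact h i)⟩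
  map_add' x y := by
    apply Subtype.ext
    simp [add_smul, Finset.sum_add_distrib]
  map_smul' r x := by
    apply Subtype.ext
    simp [Finset.smul_sum, smul_smul]

@[simp] lemma sumMap_coe (m N : ℕ) (a : Fin N → ℕ) (h) (c : Fin N → k) :
    (sumMap k m N a h c : MvPolynomial (Fin 2) k)
      = ∑ i : Fin N, c i • monomial (dd (a i) i.1) (1:k) := rfl

def psi1fwd (m : ℕ) : (Fin (m+1) → k) →ₗ[k] Vd k m :=
  sumMap k m (m+1) (fun i => m - i.1) (fun i => by show m - i.1 + i.1 = m; have := i.2; omega)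

def psi1inv (m : ℕ) : Vd k m →ₗ[k] (Fin (m+1) → k) where
  toFun g i := MvPolynomial.coeff (dd (m - i.1) i.1) g.1
  map_add' x y := by funext i; simp [MvPolynomial.coeff_add]
  map_smul' r x := by funext i; simp [MvPolynomial.coeff_smul]

lemma psi1_left (m : ℕ) : (psi1inv k m) ∘ₗ (psi1fwd k m) = LinearMap.id := by
  apply LinearMap.ext
  intro c
  funext i
  exact coeff_dd_sum k c (fun i => m - i.1) i

lemma psi1_right (m : ℕ) : (psi1fwd k m) ∘ₗ (psi1inv k m) = LinearMap.id := by
  apply LinearMap.ext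
  intro g
  apply Subtype.ext
  show ∑ i : Fin (m+1),
      MvPolynomial.coeff (dd (m - i.1) i.1) g.1 • monomial (dd (m - i.1) i.1) (1:k) = g.1
  have h2 : ∀ i : Fin (m+1),
      MvPolynomial.coeff (dd (m - i.1) i.1) g.1 • monomial (dd (m - i.1) i.1) (1:k)
        = monomial (dd (m - i.1) i.1) (MvPolynomial.coeff (dd (m - i.1) i.1) g.1) := by
    intro i; rw [smul_monomial, smul_eq_mul, mul_one]
  rw [Finset.sum_congr rfl (fun i _ => h2 i)]
  rw [Fin.sum_univ_eq_sum_range (fun i => monomial (dd (m - i) i)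
      (MvPolynomial.coeff (dd (m - i) i) g.1))]
  exact homog_sum k ((mem_homogeneousSubmodule _ _).mp g.2)

def psi1 (m : ℕ) : (Fin (m+1) → k) ≃ₗ[k] Vd k m :=
  LinearEquiv.ofLinear (psi1fwd k m) (psi1inv k m) (psi1_right k m) (psi1_left k m)

abbrev fC (m : ℕ) : Vd k (m+1) := fCyc k (m+1)

def L0 (m : ℕ) : Vd k (m+1) →ₗ[k] (Fin (m+1) → k) where
  toFun g i := MvPolynomial.coeff (dd (m+1 - i.1) i.1) g.1
    + (if i.1 = 0 then MvPolynomial.coeff (dd 0 (m+1)) g.1 else 0)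
  map_add' x y := by
    funext i
    simp only [Submodule.coe_add, MvPolynomial.coeff_add, Pi.add_apply]
    split_ifs <;> ring
  map_smul' r x := by
    funext i
    simp only [SetLike.val_smul, MvPolynomial.coeff_smul, RingHom.id_apply, Pi.smul_apply,
      smul_eq_mul]
    split_ifs <;> ring

lemma L0_fC (m : ℕ) : L0 k m (fC k m) = 0 := by
  funext i
  show MvPolynomial.coeff (dd (m+1 - i.1) i.1)
      ((X 1 : MvPolynomial (Fin 2) k) ^ (m+1) - (X 0) ^ (m+1))
    + (if i.1 = 0 then MvPolynomial.coeff (dd 0 (m+1))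
      ((X 1 : MvPolynomial (Fin 2) k) ^ (m+1) - (X 0) ^ (m+1)) else 0) = 0
  have hi := i.2
  rw [X_pow_eq_monomial, X_pow_eq_monomial, ← dd_zero_left, ← dd_zero_right]
  simp only [MvPolynomial.coeff_sub, coeff_monomial, dd_eq_iff]
  by_cases h0 : i.1 = 0 <;> split_ifs
  all_goals first | ring1 | (exfalso; omega) | exact (‹False ∧ False›).1.elim

def psi0raw (m : ℕ) : (Fin (m+1) → k) →ₗ[k] Vd k (m+1) :=
  sumMap k (m+1) (m+1) (fun i => m+1 - i.1)
    (fun i => by show m+1 - i.1 + i.1 = m+1; have := i.2; omega)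

def psi0fwd (m : ℕ) : (Fin (m+1) → k) →ₗ[k] (Vd k (m+1) ⧸ (k ∙ fC k m)) :=
  (Submodule.mkQ (k ∙ fC k m)) ∘ₗ psi0raw k m

def psi0inv (m : ℕ) : (Vd k (m+1) ⧸ (k ∙ fC k m)) →ₗ[k] (Fin (m+1) → k) :=
  Submodule.liftQ (k ∙ fC k m) (L0 k m) (by
    rw [Submodule.span_singleton_le_iff_mem, LinearMap.mem_ker]
    exact L0_fC k m)

lemma psi0_left (m : ℕ) : (psi0inv k m) ∘ₗ (psi0fwd k m) = LinearMap.id := by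
  apply LinearMap.ext
  intro c
  funext i
  show L0 k m (psi0raw k m c) i = c i
  show MvPolynomial.coeff (dd (m+1 - i.1) i.1) (psi0raw k m c).1
    + (if i.1 = 0 then MvPolynomial.coeff (dd 0 (m+1)) (psi0raw k m c).1 else 0) = c i
  have h1 : MvPolynomial.coeff (dd (m+1 - i.1) i.1) (psi0raw k m c).1 = c i :=
    coeff_dd_sum k c (fun i => m+1 - i.1) i
  have h2 : MvPolynomial.coeff (dd 0 (m+1)) (psi0raw k m c).1 = 0 :=
    coeff_dd_sum_ne k c (fun i => m+1 - i.1) 0 (m+1) (fun i => by have := i.2; omega)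
  rw [h1, h2]
  split_ifs <;> ring

lemma psi0_right (m : ℕ) : (psi0fwd k m) ∘ₗ (psi0inv k m) = LinearMap.id := by
  apply Submodule.linearMap_qext
  apply LinearMap.ext
  intro g
  simp only [LinearMap.comp_apply, Submodule.mkQ_apply, LinearMap.id_apply]
  have hinv : psi0inv k m (Submodule.Quotient.mk g) = L0 k m g :=
    Submodule.liftQ_apply _ _ _
  rw [hinv]
  show Submodule.Quotient.mk (psi0raw k m (L0 k m g)) = Submodule.Quotient.mk g
  rw [Submodule.Quotient.eq, Submodule.mem_span_singleton]
  set ct := MvPolynomial.coeff (dd 0 (m+1)) g.1 with hct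
  refine ⟨-ct, ?_⟩
  apply Subtype.ext
  have hcoe : ((psi0raw k m (L0 k m g) - g : Vd k (m+1)) : MvPolynomial (Fin 2) k)
      = (psi0raw k m (L0 k m g)).1 - g.1 := rfl
  rw [SetLike.val_smul, hcoe]
  set i0 : Fin (m+1) := ⟨0, Nat.succ_pos m⟩ with hi0
  set M : Fin (m+1) → MvPolynomial (Fin 2) k :=
    fun i => monomial (dd (m+1 - i.1) i.1) (1:k) with hM
  set ci : Fin (m+1) → k :=
    fun i => MvPolynomial.coeff (dd (m+1 - i.1) i.1) g.1 with hci
  have hA : (psi0raw k m (L0 k m g)).1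
      = (∑ i : Fin (m+1), ci i • M i) + ct • M i0 := by
    have hraw : (psi0raw k m (L0 k m g)).1
        = ∑ i : Fin (m+1), (L0 k m g) i • monomial (dd (m+1 - i.1) i.1) (1:k) := rfl
    rw [hraw]
    have : ∀ i : Fin (m+1), (L0 k m g) i • monomial (dd (m+1 - i.1) i.1) (1:k)
        = ci i • M i + (if i = i0 then ct • M i0 else 0) := by
      intro i
      show (ci i + (if i.1 = 0 then ct else 0)) • M i
        = ci i • M i + (if i = i0 then ct • M i0 else 0)
      rw [add_smul]
      congr 1
      by_cases h : i.1 = 0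
      · have : i = i0 := Fin.ext h
        subst this
        rw [if_pos rfl, if_pos rfl]
      · rw [if_neg h, if_neg (by intro hc; exact h (by rw [hc]))]
        rw [zero_smul]
    rw [Finset.sum_congr rfl (fun i _ => this i), Finset.sum_add_distrib,
      Finset.sum_ite_eq' Finset.univ i0 (fun _ => ct • M i0),
      if_pos (Finset.mem_univ i0)]
  have hg : g.1 = (∑ i : Fin (m+1), ci i • M i) + monomial (dd 0 (m+1)) ct := by
    have hh := homog_sum k ((mem_homogeneousSubmodule _ _).mp g.2)
    rw [← hh, Finset.sum_range_succ]
    congr 1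
    · rw [← Fin.sum_univ_eq_sum_range
        (fun i => monomial (dd (m+1-i) i) (MvPolynomial.coeff (dd (m+1-i) i) g.1))]
      apply Finset.sum_congr rfl
      intro i _
      rw [hci, hM, smul_monomial, smul_eq_mul, mul_one]
    · rw [Nat.sub_self, hct]
  rw [hA, hg]
  have hM0 : M i0 = monomial (dd (m+1) 0) (1:k) := by simp [hM, hi0]
  rw [hM0]
  have hfc : ((fC k m : Vd k (m+1)) : MvPolynomial (Fin 2) k)
      = (X 1 : MvPolynomial (Fin 2) k) ^ (m+1) - (X 0) ^ (m+1) := rfl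
  rw [hfc]
  rw [X_pow_eq_monomial, X_pow_eq_monomial, ← dd_zero_left, ← dd_zero_right]
  have h1 : ct • monomial (dd (m+1) 0) (1:k) = monomial (dd (m+1) 0) ct := by
    rw [smul_monomial, smul_eq_mul, mul_one]
  have h2 : ct • monomial (dd 0 (m+1)) (1:k) = monomial (dd 0 (m+1)) ct := by
    rw [smul_monomial, smul_eq_mul, mul_one]
  rw [neg_smul, smul_sub, h1, h2]
  abel

lemma X0_mul_monomial (a b : ℕ) :
    (X 0 : MvPolynomial (Fin 2) k) * monomial (dd a b) (1:k) = monomial (dd (a+1) b) (1:k) := by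
  rw [← dd_add0, monomial_single_add, pow_one]

lemma X1_mul_monomial (a b : ℕ) :
    (X 1 : MvPolynomial (Fin 2) k) * monomial (dd a b) (1:k) = monomial (dd a (b+1)) (1:k) := by
  rw [← dd_add1, monomial_single_add, pow_one]

def psi0 (m : ℕ) : (Fin (m+1) → k) ≃ₗ[k] (Vd k (m+1) ⧸ (k ∙ fC k m)) :=
  LinearEquiv.ofLinear (psi0fwd k m) (psi0inv k m) (psi0_right k m) (psi0_left k m)

lemma raw_eq_mulX (m : ℕ) (c : Fin (m+1) → k) :
    psi0raw k m c = mulX k (m+1) (psi1fwd k m c) := by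
  apply Subtype.ext
  have h1 : (psi0raw k m c : MvPolynomial (Fin 2) k)
      = ∑ i : Fin (m+1), c i • monomial (dd (m+1 - i.1) i.1) (1:k) := rfl
  have h2 : ((mulX k (m+1) (psi1fwd k m c) : Vd k (m+1)) : MvPolynomial (Fin 2) k)
      = X 0 * ∑ i : Fin (m+1), c i • monomial (dd (m - i.1) i.1) (1:k) := rfl
  rw [h1, h2, Finset.mul_sum]
  apply Finset.sum_congr rfl
  intro i _
  rw [mul_smul_comm, X0_mul_monomial,
    show m - i.1 + 1 = m + 1 - i.1 from by have := i.2; omega]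

def sIdx (m : ℕ) (hn : 0 < m+1) (j : Fin (m+1)) : Fin (m+1) :=
  ⟨(j.1 + (m + 1 - 1)) % (m+1), Nat.mod_lt _ hn⟩

lemma cycShift_apply (m : ℕ) (hn : 0 < m+1) (c : Fin (m+1) → k) (j : Fin (m+1)) :
    cycShift k (m+1) hn c j = c (sIdx m hn j) := rfl

lemma sIdx_succ (m : ℕ) (hn : 0 < m+1) (i : Fin (m+1)) : sIdx m hn (i + 1) = i := by
  apply Fin.ext
  show ((i+1 : Fin (m+1)).1 + (m + 1 - 1)) % (m+1) = i.1
  rw [Fin.val_add, Fin.val_one']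
  rcases Nat.eq_zero_or_pos m with h|h
  · subst h; omega
  · have h1 : (1:ℕ) % (m+1) = 1 := Nat.mod_eq_of_lt (by omega)
    rw [h1, Nat.mod_add_mod]
    have h2 : i.1 + 1 + (m + 1 - 1) = i.1 + (m+1) := by omega
    rw [h2, Nat.add_mod_right]
    exact Nat.mod_eq_of_lt i.2

lemma val_succ_lt (m : ℕ) (i : Fin (m+1)) (h : i.1 < m) : ((i+1 : Fin (m+1))).1 = i.1 + 1 := by
  rw [Fin.val_add, Fin.val_one']
  have h1 : (1:ℕ) % (m+1) = 1 := Nat.mod_eq_of_lt (by omega)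
  rw [h1]
  exact Nat.mod_eq_of_lt (by omega)

lemma val_succ_last (m : ℕ) (i : Fin (m+1)) (h : i.1 = m) : ((i+1 : Fin (m+1))).1 = 0 := by
  rw [Fin.val_add, Fin.val_one', h]
  rcases Nat.eq_zero_or_pos m with h0|h0
  · subst h0; rfl
  · have h1 : (1:ℕ) % (m+1) = 1 := Nat.mod_eq_of_lt (by omega)
    rw [h1]
    simp

lemma cond2 (m : ℕ) (hn : 0 < m+1) (c : Fin (m+1) → k) :
    Submodule.Quotient.mk (p := (k ∙ (fC k m))) (psi0raw k m (cycShift k (m+1) hn c))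
      = Submodule.Quotient.mk (mulY k (m+1) (psi1fwd k m c)) := by
  rw [Submodule.Quotient.eq, Submodule.mem_span_singleton]
  have hvl : ((⟨m, Nat.lt_succ_self m⟩ : Fin (m+1))).1 = m := rfl
  set vl : Fin (m+1) := ⟨m, Nat.lt_succ_self m⟩
  refine ⟨-(c vl), ?_⟩
  apply Subtype.ext
  rw [SetLike.val_smul]
  have hfc : ((fC k m : Vd k (m+1)) : MvPolynomial (Fin 2) k)
      = (X 1 : MvPolynomial (Fin 2) k) ^ (m+1) - (X 0) ^ (m+1) := rfl
  have hcoe : ((psi0raw k m (cycShift k (m+1) hn c) - mulY k (m+1) (psi1fwd k m c) :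
        Vd k (m+1)) : MvPolynomial (Fin 2) k)
      = (psi0raw k m (cycShift k (m+1) hn c) : MvPolynomial (Fin 2) k)
        - (mulY k (m+1) (psi1fwd k m c) : MvPolynomial (Fin 2) k) := rfl
  have hU : (psi0raw k m (cycShift k (m+1) hn c) : MvPolynomial (Fin 2) k)
      = ∑ i : Fin (m+1), c i •
          monomial (dd (m+1 - ((i+1 : Fin (m+1))).1) ((i+1 : Fin (m+1))).1) (1:k) := by
    have h0 : (psi0raw k m (cycShift k (m+1) hn c) : MvPolynomial (Fin 2) k)
        = ∑ j : Fin (m+1), (cycShift k (m+1) hn c) j • monomial (dd (m+1 - j.1) j.1) (1:k) := rfl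
    rw [h0,
      ← Fintype.sum_equiv (Equiv.addRight (1 : Fin (m+1)))
        (fun i => (cycShift k (m+1) hn c) (i+1) • monomial
          (dd (m+1 - ((i+1 : Fin (m+1))).1) ((i+1 : Fin (m+1))).1) (1:k))
        (fun j => (cycShift k (m+1) hn c) j • monomial (dd (m+1 - j.1) j.1) (1:k))
        (fun i => rfl)]
    apply Finset.sum_congr rfl
    intro i _
    rw [cycShift_apply, sIdx_succ]
  have hW : ((mulY k (m+1) (psi1fwd k m c) : Vd k (m+1)) : MvPolynomial (Fin 2) k)
      = ∑ i : Fin (m+1), c i • monomial (dd (m - i.1) (i.1+1)) (1:k) := by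
    have h0 : ((mulY k (m+1) (psi1fwd k m c) : Vd k (m+1)) : MvPolynomial (Fin 2) k)
        = X 1 * ∑ i : Fin (m+1), c i • monomial (dd (m - i.1) i.1) (1:k) := rfl
    rw [h0, Finset.mul_sum]
    apply Finset.sum_congr rfl
    intro i _
    rw [mul_smul_comm, X1_mul_monomial]
  rw [hcoe, hU, hW, ← Finset.sum_sub_distrib, hfc]
  rw [Finset.sum_eq_single vl]
  · rw [val_succ_last m vl hvl, hvl, Nat.sub_self, Nat.sub_zero]
    rw [X_pow_eq_monomial, X_pow_eq_monomial, ← dd_zero_left, ← dd_zero_right,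
      neg_smul, smul_sub, neg_sub]
  · intro i _ hi
    have hlt : i.1 < m := by
      have h2 := i.2
      rcases Nat.lt_or_ge i.1 m with h|h
      · exact h
      · exact absurd (Fin.ext (by omega : i.1 = m)) hi
    rw [val_succ_lt m i hlt, (by omega : m + 1 - (i.1 + 1) = m - i.1), sub_self]
  · intro h
    exact absurd (Finset.mem_univ vl) h

/-- the linearization `k^{(C_n)}` of the cyclic quiver `C_n`,
given by the identity and the cyclic shift `σ`, is isomorphic as a Kronecker
representation to `R(y^n - x^n)`. -/
theorem stmt9 (k : Type) [Field k] (n : ℕ) (hn : 0 < n) :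
    ∃ (ψ₁ : (Fin n → k) ≃ₗ[k] Vm k n)
      (ψ₀ : (Fin n → k) ≃ₗ[k] RV k n (fCyc k n)),
      (∀ c : Fin n → k, ψ₀ c = Ru k n (fCyc k n) (ψ₁ c)) ∧
      (∀ c : Fin n → k, ψ₀ (cycShift k n hn c) = Rv k n (fCyc k n) (ψ₁ c)) := by
  obtain ⟨m, rfl⟩ : ∃ m, n = m + 1 := ⟨n - 1, by omega⟩
  refine ⟨psi1 k m, psi0 k m, ?_, ?_⟩
  · intro c
    show Submodule.Quotient.mk (psi0raw k m c)
      = Submodule.Quotient.mk (mulX k (m+1) (psi1fwd k m c))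
    exact congrArg _ (raw_eq_mulX k m c)
  · intro c
    exact cond2 k m hn c


end
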